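/- Let S : [0,∞) → ℝ≥0 be differentiable, u : [0,∞) → ℝ≥0, and β₁, β₂ : ℝ≥0 → ℝ≥0 strictly increasing continuous with β₁(0) = β₂(0) = 0 and β₁ surjective onto ℝ≥0, such that β₁(u(t)) ≤ S(t) ≤ β₂(u(t)) for all t. If S'(t) ≤ −ψ S(t) + w(t) with ψ > 0 and w ≥ 0 continuous, then u(t) ≤ β₁⁻¹( 2 e^{−ψt} β₂(u(0)) ) + β₁⁻¹( (2/ψ) sup_{τ∈[0,t]} w(τ) ) for all t ≥ 0. -/

import Mathlib

theorem stmt_6 (S S' u w β₁ β₂ β₁inv : ℝ → ℝ) (ψ : ℝ) (hψ : 0 < ψ)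
    (hβ₁mono : StrictMonoOn β₁ (Set.Ici 0)) (hβ₂mono : StrictMonoOn β₂ (Set.Ici 0))
    (hβ₁cont : ContinuousOn β₁ (Set.Ici 0)) (hβ₂cont : ContinuousOn β₂ (Set.Ici 0))
    (hβ₁0 : β₁ 0 = 0) (hβ₂0 : β₂ 0 = 0)
    (hβ₁surj : Set.SurjOn β₁ (Set.Ici 0) (Set.Ici 0))
    (hβ₁nn : ∀ x, 0 ≤ x → 0 ≤ β₁ x) (hβ₂nn : ∀ x, 0 ≤ x → 0 ≤ β₂ x)
    (hinvl : ∀ x, 0 ≤ x → β₁inv (β₁ x) = x)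
    (hinvr : ∀ y, 0 ≤ y → β₁ (β₁inv y) = y ∧ 0 ≤ β₁inv y)
    (hS : ∀ t, 0 ≤ t → HasDerivAt S (S' t) t)
    (hSnn : ∀ t, 0 ≤ t → 0 ≤ S t)
    (hunn : ∀ t, 0 ≤ t → 0 ≤ u t)
    (hsand : ∀ t, 0 ≤ t → β₁ (u t) ≤ S t ∧ S t ≤ β₂ (u t))
    (hw : Continuous w) (hwnn : ∀ t, 0 ≤ t → 0 ≤ w t)
    (hdiss : ∀ t, 0 ≤ t → S' t ≤ -ψ * S t + w t) :
    ∀ t, 0 ≤ t →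
      u t ≤ β₁inv (2 * (Real.exp (-ψ * t) * β₂ (u 0)))
            + β₁inv ((2 / ψ) * sSup (w '' Set.Icc 0 t)) := by
  -- monotonicity of the inverse on nonneg reals
  have hinvmono : ∀ y₁ y₂, 0 ≤ y₁ → y₁ ≤ y₂ → β₁inv y₁ ≤ β₁inv y₂ := by
    intro y₁ y₂ h1 h12
    obtain ⟨e1, n1⟩ := hinvr y₁ h1
    obtain ⟨e2, n2⟩ := hinvr y₂ (h1.trans h12)
    by_contra h
    push_neg at h
    have := hβ₁mono (Set.mem_Ici.2 n2) (Set.mem_Ici.2 n1) h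
    rw [e1, e2] at this
    linarith
  intro t ht
  set M : ℝ := sSup (w '' Set.Icc 0 t) with hMdef
  have hc : IsCompact (Set.Icc (0:ℝ) t) := isCompact_Icc
  have hbdd : BddAbove (w '' Set.Icc 0 t) := (hc.image hw).bddAbove
  have hMle : ∀ s ∈ Set.Icc (0:ℝ) t, w s ≤ M := fun s hs =>
    le_csSup hbdd (Set.mem_image_of_mem w hs)
  have hM0 : 0 ≤ M := le_trans (hwnn 0 le_rfl) (hMle 0 ⟨le_rfl, ht⟩)
  -- Gronwall-type estimate
  set g : ℝ → ℝ := fun s => Real.exp (ψ * s) * S s + (M / ψ) * (1 - Real.exp (ψ * s)) with hg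
  have hgderiv : ∀ s, 0 ≤ s →
      HasDerivAt g (Real.exp (ψ * s) * (ψ * S s + S' s - M)) s := by
    intro s hs
    have he : HasDerivAt (fun x => Real.exp (ψ * x)) (Real.exp (ψ * s) * ψ) s := by
      simpa using ((hasDerivAt_id s).const_mul ψ).exp
    have h1 := he.mul (hS s hs)
    have h2 : HasDerivAt (fun x => (M / ψ) * (1 - Real.exp (ψ * x)))
        ((M / ψ) * (0 - Real.exp (ψ * s) * ψ)) s :=
      ((hasDerivAt_const s (1:ℝ)).sub he).const_mul (M / ψ)
    have := h1.add h2
    refine this.congr_deriv ?_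
    have hcan : M / ψ * ψ = M := div_mul_cancel₀ M hψ.ne'
    linear_combination (-Real.exp (ψ * s)) * hcan
  have hgd : ∀ s ∈ interior (Set.Icc (0:ℝ) t), HasDerivAt g
      (Real.exp (ψ * s) * (ψ * S s + S' s - M)) s := by
    intro s hs
    rw [interior_Icc] at hs
    exact hgderiv s hs.1.le
  have hgcont : ContinuousOn g (Set.Icc 0 t) := by
    intro s hs
    exact ((hgderiv s hs.1).continuousAt).continuousWithinAt
  have hderivle : ∀ s ∈ interior (Set.Icc (0:ℝ) t), deriv g s ≤ 0 := by
    intro s hs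
    rw [(hgd s hs).deriv]
    rw [interior_Icc] at hs
    have hws := hMle s ⟨hs.1.le, hs.2.le⟩
    have hd := hdiss s hs.1.le
    have hexp : 0 < Real.exp (ψ * s) := Real.exp_pos _
    nlinarith
  have hanti : AntitoneOn g (Set.Icc 0 t) :=
    antitoneOn_of_deriv_nonpos (convex_Icc 0 t) hgcont
      (fun s hs => (hgd s hs).differentiableAt.differentiableWithinAt) hderivle
  have hgt : g t ≤ g 0 := hanti ⟨le_rfl, ht⟩ ⟨ht, le_rfl⟩ ht
  have hg0 : g 0 = S 0 := by simp [hg]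
  -- deduce S t ≤ exp(-ψ t) S 0 + M/ψ
  have hSbound : S t ≤ Real.exp (-ψ * t) * S 0 + M / ψ := by
    have hexp : 0 < Real.exp (ψ * t) := Real.exp_pos _
    have hprod : Real.exp (-ψ * t) * Real.exp (ψ * t) = 1 := by
      rw [← Real.exp_add]; ring_nf; exact Real.exp_zero
    have hMψ : 0 ≤ M / ψ := div_nonneg hM0 hψ.le
    rw [hg0] at hgt
    simp only [hg] at hgt
    have key := mul_le_mul_of_nonneg_left hgt (Real.exp_pos (-ψ * t)).le
    nlinarith [key, hprod, hSnn t ht, mul_nonneg (Real.exp_pos (-ψ * t)).le hMψ, hMψ,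
      (Real.exp_pos (-ψ * t)).le]
  -- sandwich
  have hsand_t := hsand t ht
  have hsand_0 := hsand 0 le_rfl
  have hβ2u0 : 0 ≤ β₂ (u 0) := hβ₂nn _ (hunn 0 le_rfl)
  set A : ℝ := Real.exp (-ψ * t) * β₂ (u 0) with hA
  set B : ℝ := M / ψ with hB
  have hAnn : 0 ≤ A := mul_nonneg (Real.exp_pos _).le hβ2u0
  have hBnn : 0 ≤ B := div_nonneg hM0 hψ.le
  have hub : β₁ (u t) ≤ A + B := by
    have : Real.exp (-ψ * t) * S 0 ≤ A :=
      mul_le_mul_of_nonneg_left hsand_0.2 (Real.exp_pos _).le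
    linarith [hsand_t.1, hSbound]
  have h2B : (2 / ψ) * M = 2 * B := by
    rw [hB]; ring
  have huteq : u t = β₁inv (β₁ (u t)) := (hinvl _ (hunn t ht)).symm
  have hβnn : 0 ≤ β₁ (u t) := hβ₁nn _ (hunn t ht)
  rw [h2B, huteq]
  rcases le_total A B with hAB | hAB
  · have h1 : β₁ (u t) ≤ 2 * B := by linarith
    have := hinvmono _ _ hβnn h1
    have h0 := (hinvr (2 * A) (by linarith)).2
    linarith
  · have h1 : β₁ (u t) ≤ 2 * A := by linarith
    have := hinvmono _ _ hβnn h1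
    have h0 := (hinvr (2 * B) (by linarith)).2
    linarith
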